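/- arXiv:0802.0137 — 3 statements merged into one kernel-verified Lean document; each statement's English description precedes it below -/
import Mathlib

section
/- Let V be a type, r a binary relation on V, and f : Set V → Set V a function such that for every A ⊆ V the restriction of r to A \ f(A) is acyclic. For T ∈ V let anc_r(T) = {x | ReflTransGen r x T} be its ancestor set, and define the committed set C = {T | T ∉ f(anc_r(T))}. Then the restriction of r to C is acyclic. -/
/-- If `f` returns a feedback vertex set of any induced subgraph, then the set of
vertices `T` not in the feedback set of their own ancestor set induces an acyclic
subgraph. -/
theorem committed_acyclic {V : Type*} (r : V → V → Prop) (f : Set V → Set V)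
    (hf : ∀ A : Set V, ∀ x ∈ A \ f A,
      ¬ Relation.TransGen (fun a b => a ∈ A \ f A ∧ b ∈ A \ f A ∧ r a b) x x) :
    ∀ x ∈ {T | T ∉ f {y | Relation.ReflTransGen r y T}},
      ¬ Relation.TransGen
        (fun a b => a ∈ {T | T ∉ f {y | Relation.ReflTransGen r y T}} ∧
                    b ∈ {T | T ∉ f {y | Relation.ReflTransGen r y T}} ∧ r a b) x x := by
  intro x hx hcyc
  set C := {T | T ∉ f {y | Relation.ReflTransGen r y T}} with hC
  set A := {y | Relation.ReflTransGen r y x} with hA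
  -- a committed vertex mutually reachable with x lies in A \ f A
  have key : ∀ a, a ∈ C → Relation.ReflTransGen r a x → Relation.ReflTransGen r x a →
      a ∈ A \ f A := by
    intro a ha hax hxa
    refine ⟨hax, ?_⟩
    have heq : {y | Relation.ReflTransGen r y a} = A := by
      ext y
      exact ⟨fun hy => hy.trans hax, fun hy => hy.trans hxa⟩
    have := ha
    rw [hC, Set.mem_setOf_eq, heq] at this
    exact this
  have main : ∀ b, Relation.TransGen
      (fun a b => a ∈ C ∧ b ∈ C ∧ r a b) x b →
      Relation.ReflTransGen r b x →
      Relation.TransGen (fun a b => a ∈ A \ f A ∧ b ∈ A \ f A ∧ r a b) x b := by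
    intro b h
    induction h with
    | single h1 =>
      intro hbx
      rename_i b'
      exact Relation.TransGen.single
        ⟨key x hx Relation.ReflTransGen.refl Relation.ReflTransGen.refl,
         key b' h1.2.1 hbx (Relation.ReflTransGen.single h1.2.2), h1.2.2⟩
    | tail hxb hbc ih =>
      intro hcx
      rename_i b' c'
      have hxb' : Relation.ReflTransGen r x b' :=
        (Relation.TransGen.mono (fun a b h => h.2.2) _ _ hxb).to_reflTransGen
      have hbx : Relation.ReflTransGen r b' x :=
        (Relation.ReflTransGen.single hbc.2.2).trans hcx
      have hxc : Relation.ReflTransGen r x c' :=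
        hxb'.trans (Relation.ReflTransGen.single hbc.2.2)
      exact (ih hbx).tail ⟨key b' hbc.1 hbx hxb', key c' hbc.2.1 hcx hxc, hbc.2.2⟩
  exact hf A x (key x hx Relation.ReflTransGen.refl Relation.ReflTransGen.refl)
    (main x hcyc Relation.ReflTransGen.refl)
end

section
/- Let V be a type, r a binary relation on V, Ab ⊆ V a set of aborted vertices, and f : Set V → Set V a function such that for every A ⊆ V the restriction of r to A \ f(A) is acyclic. For T ∈ V let anc_r(T) = {x | ReflTransGen r x T}, and let U(T) be the set of vertices x ∈ anc_r(T) \ Ab such that the transitive closure of the restriction of r to anc_r(T) \ Ab relates x to x (the union of the cycles of non-aborted vertices inside T's predecessor graph). Define the committed set C = {T | T ∉ Ab ∧ T ∉ f(U(T))}. Then the restriction of r to C is acyclic. -/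
private lemma decide_aux {V : Type*} {p q : V → V → Prop} {c : V}
    (h : ∀ a b, p a b → Relation.ReflTransGen p c a → Relation.ReflTransGen p b c → q a b) :
    ∀ a b, Relation.TransGen p a b → Relation.ReflTransGen p c a →
      Relation.ReflTransGen p b c → Relation.TransGen q a b := by
  intro a b hab
  induction hab with
  | single hpb => exact fun h1 h2 => .single (h _ _ hpb h1 h2)
  | @tail b₀ b hab' hbc ih =>
    intro h1 h2
    exact (ih h1 (Relation.ReflTransGen.head hbc h2)).tail
      (h _ _ hbc (h1.trans hab'.to_reflTransGen) h2)

/-- Abstract form of the paper's decide procedure: committing `T` iff it is not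
aborted and not in the feedback set computed on the union of non-aborted cycles
of its predecessor graph yields an acyclic committed subgraph. -/
theorem decide_acyclic {V : Type*} (r : V → V → Prop) (Ab : Set V) (f : Set V → Set V)
    (hf : ∀ A : Set V, ∀ x ∈ A \ f A,
      ¬ Relation.TransGen (fun a b => a ∈ A \ f A ∧ b ∈ A \ f A ∧ r a b) x x) :
    let anc : V → Set V := fun T => {x | Relation.ReflTransGen r x T}
    let U : V → Set V := fun T =>
      {x | x ∈ anc T \ Ab ∧
        Relation.TransGen (fun a b => a ∈ anc T \ Ab ∧ b ∈ anc T \ Ab ∧ r a b) x x}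
    let C : Set V := {T | T ∉ Ab ∧ T ∉ f (U T)}
    ∀ x ∈ C, ¬ Relation.TransGen (fun a b => a ∈ C ∧ b ∈ C ∧ r a b) x x := by
  intro anc U C x hx hcyc
  set cRel : V → V → Prop := fun a b => a ∈ C ∧ b ∈ C ∧ r a b with hcRel
  have hancr : ∀ a b : V, Relation.ReflTransGen cRel a b → Relation.ReflTransGen r a b :=
    fun a b h => Relation.ReflTransGen.mono (fun _ _ hc => hc.2.2) a b h
  have hanceq : ∀ y : V, Relation.ReflTransGen r x y → Relation.ReflTransGen r y x →
      anc y = anc x := by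
    intro y hxy hyx
    ext z
    exact ⟨fun hz => Relation.ReflTransGen.trans hz hyx,
           fun hz => Relation.ReflTransGen.trans hz hxy⟩
  have hstep1 : ∀ a b, cRel a b → Relation.ReflTransGen cRel x a →
      Relation.ReflTransGen cRel b x →
      (a ∈ anc x \ Ab ∧ b ∈ anc x \ Ab ∧ r a b) := by
    intro a b hab hxa hbx
    have hbanc : b ∈ anc x := hancr _ _ hbx
    have haanc : a ∈ anc x := Relation.ReflTransGen.head hab.2.2 hbanc
    exact ⟨⟨haanc, hab.1.1⟩, ⟨hbanc, hab.2.1.1⟩, hab.2.2⟩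
  -- construct a committed cycle through any vertex on the cycle through x
  have hloop : ∀ y, Relation.ReflTransGen cRel x y → Relation.ReflTransGen cRel y x →
      Relation.TransGen cRel y y := by
    intro y hxy hyx
    rcases hyx.cases_head with rfl | ⟨z, hz, hzx⟩
    · exact hcyc
    · exact Relation.TransGen.trans_left (Relation.TransGen.head' hz hzx) hxy
  have hU : ∀ y, y ∈ C → Relation.ReflTransGen cRel x y → Relation.ReflTransGen cRel y x →
      y ∈ U x := by
    intro y hy hxy hyx
    refine ⟨⟨hancr _ _ hyx, hy.1⟩, ?_⟩
    exact decide_aux hstep1 y y (hloop y hxy hyx) hxy hyx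
  have hUeq : ∀ y, Relation.ReflTransGen cRel x y → Relation.ReflTransGen cRel y x →
      U y = U x := by
    intro y hxy hyx
    have h := hanceq y (hancr _ _ hxy) (hancr _ _ hyx)
    simp only [U, h]
  have hstep2 : ∀ a b, cRel a b → Relation.ReflTransGen cRel x a →
      Relation.ReflTransGen cRel b x →
      (a ∈ U x \ f (U x) ∧ b ∈ U x \ f (U x) ∧ r a b) := by
    intro a b hab hxa hbx
    have hax : Relation.ReflTransGen cRel a x := Relation.ReflTransGen.head hab hbx
    have hxb : Relation.ReflTransGen cRel x b := hxa.tail hab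
    have hanf : a ∉ f (U x) := by rw [← hUeq a hxa hax]; exact hab.1.2
    have hbnf : b ∉ f (U x) := by rw [← hUeq b hxb hbx]; exact hab.2.1.2
    exact ⟨⟨hU a hab.1 hxa hax, hanf⟩, ⟨hU b hab.2.1 hxb hbx, hbnf⟩, hab.2.2⟩
  have hbig : Relation.TransGen
      (fun a b => a ∈ U x \ f (U x) ∧ b ∈ U x \ f (U x) ∧ r a b) x x :=
    decide_aux hstep2 x x hcyc Relation.ReflTransGen.refl Relation.ReflTransGen.refl
  exact hf (U x) x ⟨hU x hx .refl .refl, hx.2⟩ hbig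
end

section
/- Let V be a type, ρ a binary relation on V, and r, r' two subrelations of ρ (for all a b, r a b → ρ a b and r' a b → ρ a b). Fix T ∈ V and suppose both r and r' contain every ρ-edge whose target is a ρ-ancestor of T, i.e. for all a b, if ρ a b and ReflTransGen ρ b T then r a b and r' a b. Then the ancestor sets of T under r and r' coincide: {x | ReflTransGen r x T} = {x | ReflTransGen r' x T}. -/
lemma agree_aux {V : Type*} (ρ s : V → V → Prop) (T : V)
    (hsub : ∀ a b, s a b → ρ a b)
    (hclosed : ∀ a b, ρ a b → Relation.ReflTransGen ρ b T → s a b) :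
    ∀ x, Relation.ReflTransGen s x T ↔ Relation.ReflTransGen ρ x T := by
  intro x
  constructor
  · exact Relation.ReflTransGen.mono (fun a b => hsub a b) x T
  · intro h
    induction h using Relation.ReflTransGen.head_induction_on with
    | refl => exact Relation.ReflTransGen.refl
    | head hab hbT ih => exact Relation.ReflTransGen.head (hclosed _ _ hab hbT) ih

/-- Any two sites at which `T` is closed agree on the predecessor graph of `T`. -/
theorem closed_ancestors_agree {V : Type*} (ρ r r' : V → V → Prop) (T : V)
    (hsub : ∀ a b, r a b → ρ a b) (hsub' : ∀ a b, r' a b → ρ a b)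
    (hclosed : ∀ a b, ρ a b → Relation.ReflTransGen ρ b T → r a b)
    (hclosed' : ∀ a b, ρ a b → Relation.ReflTransGen ρ b T → r' a b) :
    {x | Relation.ReflTransGen r x T} = {x | Relation.ReflTransGen r' x T} := by
  ext x
  simp only [Set.mem_setOf_eq, agree_aux ρ r T hsub hclosed, agree_aux ρ r' T hsub' hclosed']
end
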